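/- Let k ≥ 2 and let U be the connected graph on 2k + 2 vertices 0,…,2k+1 in which the vertices 0,…,2k−1 form the cycle C_{2k} (vertex i adjacent to vertex j iff i − j ≡ ±1 (mod 2k)), vertex 2k is a pendant vertex adjacent only to vertex 0, and vertex 2k+1 is a pendant vertex adjacent only to vertex k (the cycle vertex opposite to 0). Let Δ be the distance squared matrix of U and, for a vertex v, let Δ_v denote the column of Δ indexed by v. Then Δ_0 − Δ_k − (k/(k+2))·(Δ_{2k} − Δ_{2k+1}) = 0; in particular Δ is singular, so i_0(Δ) ≥ 1. -/

import Mathlib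

open Matrix

/-- The distance squared matrix of a graph. -/
noncomputable def distSqMatrix {V : Type*} [Fintype V] (G : SimpleGraph V) :
    Matrix V V ℝ := Matrix.of fun i j => ((G.dist i j : ℝ)) ^ 2

/-- number of positive eigenvalues (with multiplicity) of a real symmetric matrix -/
noncomputable def iPos {V : Type*} [Fintype V] [DecidableEq V] (M : Matrix V V ℝ) : ℕ :=
  if h : M.IsHermitian then (Finset.univ.filter fun i => 0 < h.eigenvalues i).card else 0

/-- number of negative eigenvalues (with multiplicity) of a real symmetric matrix -/
noncomputable def iNeg {V : Type*} [Fintype V] [DecidableEq V] (M : Matrix V V ℝ) : ℕ :=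
  if h : M.IsHermitian then (Finset.univ.filter fun i => h.eigenvalues i < 0).card else 0

/-- multiplicity of 0 as an eigenvalue of a real symmetric matrix -/
noncomputable def iZero {V : Type*} [Fintype V] [DecidableEq V] (M : Matrix V V ℝ) : ℕ :=
  if h : M.IsHermitian then (Finset.univ.filter fun i => h.eigenvalues i = 0).card else 0

/- ---------- auxiliary material ---------- -/

lemma walk_lower {V : Type*} (G : SimpleGraph V) (x0 : V) (f : V → ℕ)
    (h0 : f x0 = 0)
    (hlip : ∀ u v, G.Adj u v → f u ≤ f v + 1) :
    ∀ {i : V} (p : G.Walk i x0), f i ≤ p.length := by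
  intro i p
  induction p with
  | nil => simp [h0]
  | cons h p ih =>
      simp only [SimpleGraph.Walk.length_cons]
      have h2 := hlip _ _ h
      omega

/-- If a potential function `f` vanishes exactly at `x0`, is 1-Lipschitz along edges,
and admits a descent direction at every other vertex, then `f` computes distances to `x0`. -/
lemma dist_eq_of_potential {V : Type*} (G : SimpleGraph V) (x0 : V) (f : V → ℕ)
    (h0 : f x0 = 0)
    (hzero : ∀ i, f i = 0 → i = x0)
    (hlip : ∀ u v, G.Adj u v → f u ≤ f v + 1)
    (hdesc : ∀ i, f i ≠ 0 → ∃ v, G.Adj i v ∧ f v + 1 = f i) :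
    ∀ i, G.dist i x0 = f i := by
  have upper : ∀ n i, f i ≤ n → ∃ p : G.Walk i x0, p.length = f i := by
    intro n
    induction n with
    | zero =>
        intro i hi
        have : i = x0 := hzero i (Nat.le_zero.mp hi)
        subst this; exact ⟨SimpleGraph.Walk.nil, by simp [h0]⟩
    | succ n ih =>
        intro i hi
        by_cases h : f i = 0
        · have : i = x0 := hzero i h
          subst this; exact ⟨SimpleGraph.Walk.nil, by simp [h0]⟩
        · obtain ⟨v, hadj, hv⟩ := hdesc i h
          obtain ⟨p, hp⟩ := ih v (by omega)
          exact ⟨SimpleGraph.Walk.cons hadj p, by simp [hp]; omega⟩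
  have lower : ∀ {i : V} (p : G.Walk i x0), f i ≤ p.length := walk_lower G x0 f h0 hlip
  intro i
  obtain ⟨p, hp⟩ := upper (f i) i le_rfl
  have h1 : G.dist i x0 ≤ f i := hp ▸ SimpleGraph.dist_le p
  have hr : G.Reachable i x0 := ⟨p⟩
  obtain ⟨q, hq⟩ := hr.exists_walk_length_eq_dist
  have h2 : f i ≤ G.dist i x0 := hq ▸ lower q
  omega

/-- potential: distance to vertex `0` -/
def pf0 (k x : ℕ) : ℕ :=
  if x ≤ k then x else if x < 2*k then 2*k - x else if x = 2*k then 1 else k+1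

/-- potential: distance to vertex `k` -/
def pfk (k x : ℕ) : ℕ :=
  if x < 2*k then (if x ≤ k then k - x else x - k) else if x = 2*k then k+1 else 1

/-- potential: distance to vertex `2k` -/
def pf2k (k x : ℕ) : ℕ := if x = 2*k then 0 else pf0 k x + 1

/-- potential: distance to vertex `2k+1` -/
def pf2k1 (k x : ℕ) : ℕ := if x = 2*k+1 then 0 else pfk k x + 1

/-- plain linear-arithmetic description of (half of) the edge relation -/
def Q19 (k x y : ℕ) : Prop :=
  (x+1 < 2*k ∧ y = x+1) ∨ (x+1 = 2*k ∧ y = 0) ∨ (x = 2*k ∧ y = 0) ∨ (x = 2*k+1 ∧ y = k)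

lemma adj_elim {k : ℕ} {U : SimpleGraph (Fin (2 * k + 2))}
    (hU : U = SimpleGraph.fromRel (fun a b : Fin (2 * k + 2) =>
      ((a : ℕ) < 2 * k ∧ (b : ℕ) = ((a : ℕ) + 1) % (2 * k)) ∨
      ((a : ℕ) = 2 * k ∧ (b : ℕ) = 0) ∨
      ((a : ℕ) = 2 * k + 1 ∧ (b : ℕ) = k)))
    {a b : Fin (2*k+2)} (h : U.Adj a b) :
    Q19 k a.val b.val ∨ Q19 k b.val a.val := by
  subst hU
  rw [SimpleGraph.fromRel_adj] at h
  obtain ⟨hne, h | h⟩ := h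
  · left
    rcases h with ⟨h1, h2⟩ | h | h
    · rcases Nat.lt_or_ge ((a:ℕ)+1) (2*k) with hlt | hge
      · rw [Nat.mod_eq_of_lt hlt] at h2
        exact Or.inl ⟨hlt, h2⟩
      · have he : (a:ℕ)+1 = 2*k := by omega
        rw [he, Nat.mod_self] at h2
        exact Or.inr (Or.inl ⟨he, h2⟩)
    · exact Or.inr (Or.inr (Or.inl h))
    · exact Or.inr (Or.inr (Or.inr h))
  · right
    rcases h with ⟨h1, h2⟩ | h | h
    · rcases Nat.lt_or_ge ((b:ℕ)+1) (2*k) with hlt | hge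
      · rw [Nat.mod_eq_of_lt hlt] at h2
        exact Or.inl ⟨hlt, h2⟩
      · have he : (b:ℕ)+1 = 2*k := by omega
        rw [he, Nat.mod_self] at h2
        exact Or.inr (Or.inl ⟨he, h2⟩)
    · exact Or.inr (Or.inr (Or.inl h))
    · exact Or.inr (Or.inr (Or.inr h))

lemma adj_intro {k : ℕ} {U : SimpleGraph (Fin (2 * k + 2))}
    (hU : U = SimpleGraph.fromRel (fun a b : Fin (2 * k + 2) =>
      ((a : ℕ) < 2 * k ∧ (b : ℕ) = ((a : ℕ) + 1) % (2 * k)) ∨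
      ((a : ℕ) = 2 * k ∧ (b : ℕ) = 0) ∨
      ((a : ℕ) = 2 * k + 1 ∧ (b : ℕ) = k)))
    (hk : 2 ≤ k) {a b : Fin (2*k+2)} (h : Q19 k a.val b.val) : U.Adj a b := by
  subst hU
  rw [SimpleGraph.fromRel_adj]
  rcases h with ⟨h1, h2⟩ | ⟨h1, h2⟩ | ⟨h1, h2⟩ | ⟨h1, h2⟩
  · refine ⟨by simp [Fin.ext_iff]; omega, Or.inl (Or.inl ⟨by omega, ?_⟩)⟩
    rw [Nat.mod_eq_of_lt h1]; exact h2
  · refine ⟨by simp [Fin.ext_iff]; omega, Or.inl (Or.inl ⟨by omega, ?_⟩)⟩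
    rw [h1, Nat.mod_self]; exact h2
  · exact ⟨by simp [Fin.ext_iff]; omega, Or.inl (Or.inr (Or.inl ⟨h1, h2⟩))⟩
  · exact ⟨by simp [Fin.ext_iff]; omega, Or.inl (Or.inr (Or.inr ⟨h1, h2⟩))⟩

set_option maxHeartbeats 2000000 in
lemma dist_formulas {k : ℕ} (hk : 2 ≤ k) (U : SimpleGraph (Fin (2 * k + 2)))
    (hU : U = SimpleGraph.fromRel (fun a b : Fin (2 * k + 2) =>
      ((a : ℕ) < 2 * k ∧ (b : ℕ) = ((a : ℕ) + 1) % (2 * k)) ∨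
      ((a : ℕ) = 2 * k ∧ (b : ℕ) = 0) ∨
      ((a : ℕ) = 2 * k + 1 ∧ (b : ℕ) = k))) :
    ∀ i : Fin (2*k+2),
      U.dist i ⟨0, (by omega : 0 < 2*k+1+1)⟩ = pf0 k i.val ∧
      U.dist i ⟨k, (by omega : k < 2*k+1+1)⟩ = pfk k i.val ∧
      U.dist i ⟨2*k, (by omega : 2*k < 2*k+1+1)⟩ = pf2k k i.val ∧
      U.dist i ⟨2*k+1, (by omega : 2*k+1 < 2*k+1+1)⟩ = pf2k1 k i.val := by
  have hadj := fun {a b : Fin (2*k+2)} (h : U.Adj a b) => adj_elim hU h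
  have hmk := fun {a b : Fin (2*k+2)} (h : Q19 k a.val b.val) => adj_intro hU hk h
  -- distance to vertex 0
  have h0 : ∀ i, U.dist i ⟨0, by omega⟩ = pf0 k i.val := by
    apply dist_eq_of_potential
    · simp [pf0]
    · intro i hi
      have hlt := i.isLt
      apply Fin.ext
      simp only [Fin.val_mk]
      simp only [pf0, Fin.val_mk] at hi
      split_ifs at hi <;> omega
    · intro u v huv
      have hu := u.isLt; have hv := v.isLt
      rcases hadj huv with h | h <;>
        (rcases h with ⟨h1, h2⟩ | ⟨h1, h2⟩ | ⟨h1, h2⟩ | ⟨h1, h2⟩ <;>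
          (simp only [pf0, Fin.val_mk]; split_ifs <;> omega))
    · intro i hi
      have hlt := i.isLt
      simp only [pf0, Fin.val_mk] at hi
      by_cases hc1 : i.val ≤ k ∧ 1 ≤ i.val
      · obtain ⟨v, hvv⟩ : ∃ v : Fin (2*k+2), (v:ℕ) = i.val - 1 := ⟨⟨i.val - 1, by omega⟩, rfl⟩
        refine ⟨v, (hmk ?_).symm, ?_⟩
        · exact Or.inl ⟨by omega, by omega⟩
        · simp only [pf0, Fin.val_mk]; split_ifs <;> omega
      · by_cases hc2 : k < i.val ∧ i.val + 1 < 2*k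
        · obtain ⟨v, hvv⟩ : ∃ v : Fin (2*k+2), (v:ℕ) = i.val + 1 := ⟨⟨i.val + 1, by omega⟩, rfl⟩
          refine ⟨v, hmk (Or.inl ⟨by omega, by omega⟩), ?_⟩
          simp only [pf0, Fin.val_mk]; split_ifs <;> omega
        · by_cases hc3 : i.val + 1 = 2*k
          · obtain ⟨v, hvv⟩ : ∃ v : Fin (2*k+2), (v:ℕ) = 0 := ⟨⟨0, by omega⟩, rfl⟩
            refine ⟨v, hmk (Or.inr (Or.inl ⟨by omega, by omega⟩)), ?_⟩
            simp only [pf0, Fin.val_mk]; split_ifs <;> omega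
          · by_cases hc4 : i.val = 2*k
            · obtain ⟨v, hvv⟩ : ∃ v : Fin (2*k+2), (v:ℕ) = 0 := ⟨⟨0, by omega⟩, rfl⟩
              refine ⟨v, hmk (Or.inr (Or.inr (Or.inl ⟨by omega, by omega⟩))), ?_⟩
              simp only [pf0, Fin.val_mk]; split_ifs <;> omega
            · -- i.val = 2k+1
              have : i.val = 2*k+1 := by split_ifs at hi <;> omega
              obtain ⟨v, hvv⟩ : ∃ v : Fin (2*k+2), (v:ℕ) = k := ⟨⟨k, by omega⟩, rfl⟩
              refine ⟨v, hmk (Or.inr (Or.inr (Or.inr ⟨by omega, by omega⟩))), ?_⟩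
              simp only [pf0, Fin.val_mk]; split_ifs <;> omega
  -- distance to vertex k
  have hkk : ∀ i, U.dist i ⟨k, by omega⟩ = pfk k i.val := by
    apply dist_eq_of_potential
    · simp only [pfk, Fin.val_mk]; split_ifs <;> omega
    · intro i hi
      have hlt := i.isLt
      apply Fin.ext
      simp only [Fin.val_mk]
      simp only [pfk, Fin.val_mk] at hi
      split_ifs at hi <;> omega
    · intro u v huv
      have hu := u.isLt; have hv := v.isLt
      rcases hadj huv with h | h <;>
        (rcases h with ⟨h1, h2⟩ | ⟨h1, h2⟩ | ⟨h1, h2⟩ | ⟨h1, h2⟩ <;>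
          (simp only [pfk, Fin.val_mk]; split_ifs <;> omega))
    · intro i hi
      have hlt := i.isLt
      simp only [pfk, Fin.val_mk] at hi
      by_cases hc1 : i.val < k
      · obtain ⟨v, hvv⟩ : ∃ v : Fin (2*k+2), (v:ℕ) = i.val + 1 := ⟨⟨i.val + 1, by omega⟩, rfl⟩
        refine ⟨v, hmk (Or.inl ⟨by omega, by omega⟩), ?_⟩
        simp only [pfk, Fin.val_mk]; split_ifs <;> omega
      · by_cases hc2 : k < i.val ∧ i.val < 2*k
        · obtain ⟨v, hvv⟩ : ∃ v : Fin (2*k+2), (v:ℕ) = i.val - 1 := ⟨⟨i.val - 1, by omega⟩, rfl⟩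
          refine ⟨v, (hmk ?_).symm, ?_⟩
          · exact Or.inl ⟨by omega, by omega⟩
          · simp only [pfk, Fin.val_mk]; split_ifs <;> omega
        · by_cases hc3 : i.val = 2*k
          · obtain ⟨v, hvv⟩ : ∃ v : Fin (2*k+2), (v:ℕ) = 0 := ⟨⟨0, by omega⟩, rfl⟩
            refine ⟨v, hmk (Or.inr (Or.inr (Or.inl ⟨by omega, by omega⟩))), ?_⟩
            simp only [pfk, Fin.val_mk]; split_ifs <;> omega
          · have : i.val = 2*k+1 := by split_ifs at hi <;> omega
            obtain ⟨v, hvv⟩ : ∃ v : Fin (2*k+2), (v:ℕ) = k := ⟨⟨k, by omega⟩, rfl⟩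
            refine ⟨v, hmk (Or.inr (Or.inr (Or.inr ⟨by omega, by omega⟩))), ?_⟩
            simp only [pfk, Fin.val_mk]; split_ifs <;> omega
  -- distance to vertex 2k
  have h2k : ∀ i, U.dist i ⟨2*k, by omega⟩ = pf2k k i.val := by
    apply dist_eq_of_potential
    · simp [pf2k]
    · intro i hi
      have hlt := i.isLt
      apply Fin.ext
      simp only [Fin.val_mk]
      simp only [pf2k, pf0, Fin.val_mk] at hi
      split_ifs at hi <;> omega
    · intro u v huv
      have hu := u.isLt; have hv := v.isLt
      rcases hadj huv with h | h <;>
        (rcases h with ⟨h1, h2⟩ | ⟨h1, h2⟩ | ⟨h1, h2⟩ | ⟨h1, h2⟩ <;>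
          (simp only [pf2k, pf0, Fin.val_mk]; split_ifs <;> omega))
    · intro i hi
      have hlt := i.isLt
      simp only [pf2k, pf0, Fin.val_mk] at hi
      by_cases hc0 : i.val = 0
      · obtain ⟨v, hvv⟩ : ∃ v : Fin (2*k+2), (v:ℕ) = 2*k := ⟨⟨2*k, by omega⟩, rfl⟩
        refine ⟨v, (hmk ?_).symm, ?_⟩
        · exact Or.inr (Or.inr (Or.inl ⟨by omega, by omega⟩))
        · simp only [pf2k, pf0, Fin.val_mk]; split_ifs <;> omega
      · by_cases hc1 : i.val ≤ k
        · obtain ⟨v, hvv⟩ : ∃ v : Fin (2*k+2), (v:ℕ) = i.val - 1 := ⟨⟨i.val - 1, by omega⟩, rfl⟩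
          refine ⟨v, (hmk ?_).symm, ?_⟩
          · exact Or.inl ⟨by omega, by omega⟩
          · simp only [pf2k, pf0, Fin.val_mk]; split_ifs <;> omega
        · by_cases hc2 : k < i.val ∧ i.val + 1 < 2*k
          · obtain ⟨v, hvv⟩ : ∃ v : Fin (2*k+2), (v:ℕ) = i.val + 1 := ⟨⟨i.val + 1, by omega⟩, rfl⟩
            refine ⟨v, hmk (Or.inl ⟨by omega, by omega⟩), ?_⟩
            simp only [pf2k, pf0, Fin.val_mk]; split_ifs <;> omega
          · by_cases hc3 : i.val + 1 = 2*k
            · obtain ⟨v, hvv⟩ : ∃ v : Fin (2*k+2), (v:ℕ) = 0 := ⟨⟨0, by omega⟩, rfl⟩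
              refine ⟨v, hmk (Or.inr (Or.inl ⟨by omega, by omega⟩)), ?_⟩
              simp only [pf2k, pf0, Fin.val_mk]; split_ifs <;> omega
            · have : i.val = 2*k+1 := by split_ifs at hi <;> omega
              obtain ⟨v, hvv⟩ : ∃ v : Fin (2*k+2), (v:ℕ) = k := ⟨⟨k, by omega⟩, rfl⟩
              refine ⟨v, hmk (Or.inr (Or.inr (Or.inr ⟨by omega, by omega⟩))), ?_⟩
              simp only [pf2k, pf0, Fin.val_mk]; split_ifs <;> omega
  -- distance to vertex 2k+1
  have h2k1 : ∀ i, U.dist i ⟨2*k+1, by omega⟩ = pf2k1 k i.val := by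
    apply dist_eq_of_potential
    · simp [pf2k1]
    · intro i hi
      have hlt := i.isLt
      apply Fin.ext
      simp only [Fin.val_mk]
      simp only [pf2k1, pfk, Fin.val_mk] at hi
      split_ifs at hi <;> omega
    · intro u v huv
      have hu := u.isLt; have hv := v.isLt
      rcases hadj huv with h | h <;>
        (rcases h with ⟨h1, h2⟩ | ⟨h1, h2⟩ | ⟨h1, h2⟩ | ⟨h1, h2⟩ <;>
          (simp only [pf2k1, pfk, Fin.val_mk]; split_ifs <;> omega))
    · intro i hi
      have hlt := i.isLt
      simp only [pf2k1, pfk, Fin.val_mk] at hi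
      by_cases hc0 : i.val = k
      · obtain ⟨v, hvv⟩ : ∃ v : Fin (2*k+2), (v:ℕ) = 2*k+1 := ⟨⟨2*k+1, by omega⟩, rfl⟩
        refine ⟨v, (hmk ?_).symm, ?_⟩
        · exact Or.inr (Or.inr (Or.inr ⟨by omega, by omega⟩))
        · simp only [pf2k1, pfk, Fin.val_mk]; split_ifs <;> omega
      · by_cases hc1 : i.val < k
        · obtain ⟨v, hvv⟩ : ∃ v : Fin (2*k+2), (v:ℕ) = i.val + 1 := ⟨⟨i.val + 1, by omega⟩, rfl⟩
          refine ⟨v, hmk (Or.inl ⟨by omega, by omega⟩), ?_⟩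
          simp only [pf2k1, pfk, Fin.val_mk]; split_ifs <;> omega
        · by_cases hc2 : k < i.val ∧ i.val < 2*k
          · obtain ⟨v, hvv⟩ : ∃ v : Fin (2*k+2), (v:ℕ) = i.val - 1 := ⟨⟨i.val - 1, by omega⟩, rfl⟩
            refine ⟨v, (hmk ?_).symm, ?_⟩
            · exact Or.inl ⟨by omega, by omega⟩
            · simp only [pf2k1, pfk, Fin.val_mk]; split_ifs <;> omega
          · by_cases hc3 : i.val = 2*k
            · obtain ⟨v, hvv⟩ : ∃ v : Fin (2*k+2), (v:ℕ) = 0 := ⟨⟨0, by omega⟩, rfl⟩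
              refine ⟨v, hmk (Or.inr (Or.inr (Or.inl ⟨by omega, by omega⟩))), ?_⟩
              simp only [pf2k1, pfk, Fin.val_mk]; split_ifs <;> omega
            · have : i.val = 2*k+1 := by split_ifs at hi <;> omega
              exact absurd (by simp [this, pf2k1]) hi
  exact fun i => ⟨h0 i, hkk i, h2k i, h2k1 i⟩

/-- even cycle `C_{2k}` (vertices `0, …, 2k-1`) with a pendant vertex
`2k` attached to vertex `0` and a pendant vertex `2k+1` attached to the opposite
cycle vertex `k`.  The columns of the distance squared matrix indexed by
`0, k, 2k, 2k+1` satisfy `Δ_0 − Δ_k − (k/(k+2))(Δ_{2k} − Δ_{2k+1}) = 0`; in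
particular `Δ` is singular. -/
theorem stmt19 {k : ℕ} (hk : 2 ≤ k)
    (U : SimpleGraph (Fin (2 * k + 2)))
    (hU : U = SimpleGraph.fromRel (fun a b : Fin (2 * k + 2) =>
      ((a : ℕ) < 2 * k ∧ (b : ℕ) = ((a : ℕ) + 1) % (2 * k)) ∨
      ((a : ℕ) = 2 * k ∧ (b : ℕ) = 0) ∨
      ((a : ℕ) = 2 * k + 1 ∧ (b : ℕ) = k))) :
    (∀ i : Fin (2 * k + 2),
      distSqMatrix U i ⟨0, by omega⟩ - distSqMatrix U i ⟨k, by omega⟩ -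
        ((k : ℝ) / ((k : ℝ) + 2)) *
          (distSqMatrix U i ⟨2 * k, by omega⟩ - distSqMatrix U i ⟨2 * k + 1, by omega⟩)
        = 0) ∧
    1 ≤ iZero (distSqMatrix U) := by
  have hd := dist_formulas hk U hU
  have hk2 : (k:ℝ) + 2 ≠ 0 := by positivity
  have main : ∀ i : Fin (2 * k + 2),
      distSqMatrix U i ⟨0, by omega⟩ - distSqMatrix U i ⟨k, by omega⟩ -
        ((k : ℝ) / ((k : ℝ) + 2)) *
          (distSqMatrix U i ⟨2 * k, by omega⟩ - distSqMatrix U i ⟨2 * k + 1, by omega⟩)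
        = 0 := by
    intro i
    obtain ⟨e0, ek, e2k, e2k1⟩ := hd i
    have hlt := i.isLt
    simp only [distSqMatrix, Matrix.of_apply, e0, ek, e2k, e2k1]
    by_cases hc1 : i.val ≤ k
    · have v0 : pf0 k i.val = i.val := by simp [pf0, hc1]
      have vk : pfk k i.val = k - i.val := by simp only [pfk, Fin.val_mk]; split_ifs <;> omega
      have v2 : pf2k k i.val = i.val + 1 := by simp only [pf2k, pf0, Fin.val_mk]; split_ifs <;> omega
      have v3 : pf2k1 k i.val = k - i.val + 1 := by
        simp only [pf2k1, pfk, Fin.val_mk]; split_ifs <;> omega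
      rw [v0, vk, v2, v3]
      have hcast : ((k - i.val : ℕ) : ℝ) = (k:ℝ) - (i.val:ℝ) := by
        rw [Nat.cast_sub hc1]
      push_cast [hcast]
      field_simp
      ring
    · by_cases hc2 : i.val < 2*k
      · have v0 : pf0 k i.val = 2*k - i.val := by simp only [pf0, Fin.val_mk]; split_ifs <;> omega
        have vk : pfk k i.val = i.val - k := by simp only [pfk, Fin.val_mk]; split_ifs <;> omega
        have v2 : pf2k k i.val = 2*k - i.val + 1 := by
          simp only [pf2k, pf0, Fin.val_mk]; split_ifs <;> omega
        have v3 : pf2k1 k i.val = i.val - k + 1 := by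
          simp only [pf2k1, pfk, Fin.val_mk]; split_ifs <;> omega
        rw [v0, vk, v2, v3]
        have hcast : ((2*k - i.val : ℕ) : ℝ) = 2*(k:ℝ) - (i.val:ℝ) := by
          rw [Nat.cast_sub (by omega)]; push_cast; ring
        have hcast2 : ((i.val - k : ℕ) : ℝ) = (i.val:ℝ) - (k:ℝ) := by
          rw [Nat.cast_sub (by omega)]
        push_cast [hcast, hcast2]
        field_simp
        ring
      · by_cases hc3 : i.val = 2*k
        · have v0 : pf0 k i.val = 1 := by simp only [pf0, Fin.val_mk]; split_ifs <;> omega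
          have vk : pfk k i.val = k+1 := by simp only [pfk, Fin.val_mk]; split_ifs <;> omega
          have v2 : pf2k k i.val = 0 := by simp [pf2k, hc3]
          have v3 : pf2k1 k i.val = k+2 := by
            simp only [pf2k1, pfk, Fin.val_mk]; split_ifs <;> omega
          rw [v0, vk, v2, v3]
          push_cast
          field_simp
          ring
        · have hc4 : i.val = 2*k+1 := by omega
          have v0 : pf0 k i.val = k+1 := by simp only [pf0, Fin.val_mk]; split_ifs <;> omega
          have vk : pfk k i.val = 1 := by simp only [pfk, Fin.val_mk]; split_ifs <;> omega
          have v2 : pf2k k i.val = k+2 := by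
            simp only [pf2k, pf0, Fin.val_mk]; split_ifs <;> omega
          have v3 : pf2k1 k i.val = 0 := by simp [pf2k1, hc4]
          rw [v0, vk, v2, v3]
          push_cast
          field_simp
          ring
  refine ⟨main, ?_⟩
  -- singularity
  have hherm : (distSqMatrix U).IsHermitian := by
    apply Matrix.IsHermitian.ext
    intro i j
    simp [distSqMatrix, SimpleGraph.dist_comm]
  set v0 : Fin (2*k+2) := ⟨0, by omega⟩
  set vk : Fin (2*k+2) := ⟨k, by omega⟩
  set v2k : Fin (2*k+2) := ⟨2*k, by omega⟩
  set v2k1 : Fin (2*k+2) := ⟨2*k+1, by omega⟩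
  set c : ℝ := (k:ℝ) / ((k:ℝ) + 2) with hc
  set w : Fin (2*k+2) → ℝ :=
    Pi.single v0 1 + Pi.single vk (-1) + Pi.single v2k (-c) + Pi.single v2k1 c with hw
  have hwne : w ≠ 0 := by
    intro h
    have := congrFun h v0
    rw [hw] at this
    simp only [Pi.add_apply, Pi.single_eq_same, Pi.zero_apply] at this
    have e1 : v0 ≠ vk := by simp only [v0, vk, ne_eq, Fin.mk.injEq]; omega
    have e2 : v0 ≠ v2k := by simp only [v0, v2k, ne_eq, Fin.mk.injEq]; omega
    have e3 : v0 ≠ v2k1 := by simp only [v0, v2k1, ne_eq, Fin.mk.injEq]; omega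
    rw [Pi.single_eq_of_ne e1, Pi.single_eq_of_ne e2,
        Pi.single_eq_of_ne e3] at this
    norm_num at this
  have hmv : (distSqMatrix U).mulVec w = 0 := by
    funext i
    rw [hw]
    simp only [Matrix.mulVec_add, Matrix.mulVec_single, Pi.add_apply, Pi.zero_apply,
      Pi.smul_apply, op_smul_eq_mul, Matrix.col_apply]
    have := main i
    simp only [distSqMatrix, Matrix.of_apply] at this ⊢
    rw [hc]
    nlinarith [this]
  have hdet : (distSqMatrix U).det = 0 :=
    Matrix.exists_mulVec_eq_zero_iff.mp ⟨w, hwne, hmv⟩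
  have hprod : ∏ i, hherm.eigenvalues i = 0 := by
    have h := hherm.det_eq_prod_eigenvalues
    rw [hdet] at h
    exact_mod_cast h.symm
  obtain ⟨i, _, hi⟩ := Finset.prod_eq_zero_iff.mp hprod
  rw [iZero, dif_pos hherm]
  refine Finset.card_pos.mpr ⟨i, Finset.mem_filter.mpr ⟨Finset.mem_univ i, by exact_mod_cast hi⟩⟩
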